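/- Let n = 4 with 1 ≤ r_1 ≤ r_2 ≤ r_3 ≤ r_4 and assume d ∈ V_4. For c = (c_1,c_2,c_3,c_4) ∈ ℤ^4, the following are equivalent: (a) there exists x ∈ ℝ^d with −1 < x_k ≤ 0 for all k = 1,…,d and c_j − 1 < τ_j(x) ≤ c_j for j = 1,2,3,4; (b) c ∈ C(r_1,r_2,r_3,r_4). (Consequently the conic divisorial ideals of the edge ring k[K_{r_1,r_2,r_3,r_4}] are in one-to-one correspondence with the lattice points of C(r_1,r_2,r_3,r_4).) -/

import Mathlib

/-- The linear form `τ_j(x) = Σ_{k ∉ V_4} x_k - Σ_{ℓ ∈ V_j} x_ℓ - x_d` (for `n = 4`,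
where `vlast` is the last coordinate `d`). -/
noncomputable def tau4 (d : ℕ) (V1 V2 V3 Vj : Finset (Fin d)) (vlast : Fin d)
    (x : Fin d → ℝ) : ℝ :=
  (∑ k ∈ V1 ∪ V2 ∪ V3, x k) - (∑ k ∈ Vj, x k) - x vlast

/-- Membership of `(z_1,z_2,z_3,z_4) ∈ ℤ^4` in the polytope `C(r_1,r_2,r_3,r_4)`. -/
def inC4 (r1 r2 r3 r4 : ℕ) (z1 z2 z3 z4 : ℤ) : Prop :=
  (-(r2 : ℤ) ≤ z1 - z2 ∧ z1 - z2 ≤ (r1 : ℤ)) ∧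
  (-(r3 : ℤ) ≤ z1 - z3 ∧ z1 - z3 ≤ (r1 : ℤ)) ∧
  (-(r4 : ℤ) ≤ z1 - z4 ∧ z1 - z4 ≤ (r1 : ℤ)) ∧
  (-(r3 : ℤ) ≤ z2 - z3 ∧ z2 - z3 ≤ (r2 : ℤ)) ∧
  (-(r4 : ℤ) ≤ z2 - z4 ∧ z2 - z4 ≤ (r2 : ℤ)) ∧
  (-(r4 : ℤ) ≤ z3 - z4 ∧ z3 - z4 ≤ (r3 : ℤ)) ∧
  (-(r2 : ℤ) - (r3 : ℤ) + 1 ≤ z1 ∧ z1 ≤ 1) ∧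
  (-(r1 : ℤ) - (r3 : ℤ) + 1 ≤ z2 ∧ z2 ≤ 1) ∧
  (-(r1 : ℤ) - (r2 : ℤ) + 1 ≤ z3 ∧ z3 ≤ 1) ∧
  (-2 * (r3 : ℤ) ≤ z1 + z2 - z3 ∧ z1 + z2 - z3 ≤ 2) ∧
  (-2 * (r2 : ℤ) ≤ z1 + z3 - z2 ∧ z1 + z3 - z2 ≤ 2) ∧
  (-2 * (r1 : ℤ) ≤ z2 + z3 - z1 ∧ z2 + z3 - z1 ≤ 2) ∧
  (-(r3 : ℤ) - (r4 : ℤ) + 1 ≤ z1 + z2 - z4 ∧ z1 + z2 - z4 ≤ 1) ∧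
  (-(r2 : ℤ) - (r4 : ℤ) + 1 ≤ z1 + z3 - z4 ∧ z1 + z3 - z4 ≤ 1) ∧
  (-(r1 : ℤ) - (r4 : ℤ) + 1 ≤ z2 + z3 - z4 ∧ z2 + z3 - z4 ≤ 1) ∧
  (-2 * (r4 : ℤ) ≤ z1 + z2 + z3 - 2 * z4 ∧ z1 + z2 + z3 - 2 * z4 ≤ 2)

private lemma int_le_of_cast_lt {a b : ℤ} (h : (a:ℝ) < (b:ℝ) + 1) : a ≤ b := by
  have : a < b + 1 := by exact_mod_cast h
  omega

/-- The target property of the block sums `u1,u2,u3` and the last-coordinate value `w`. -/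
def GoodUW (r1 r2 r3 r4 c1 c2 c3 c4 u1 u2 u3 w : ℝ) : Prop :=
  0 ≤ u1 ∧ u1 < r1 ∧ 0 ≤ u2 ∧ u2 < r2 ∧ 0 ≤ u3 ∧ u3 < r3 ∧ 0 < w ∧ w < 1 ∧
  w - c1 ≤ u2 + u3 ∧ u2 + u3 < w - c1 + 1 ∧
  w - c2 ≤ u1 + u3 ∧ u1 + u3 < w - c2 + 1 ∧
  w - c3 ≤ u1 + u2 ∧ u1 + u2 < w - c3 + 1 ∧
  0 ≤ u1 + u2 + u3 - 2*w + c4 ∧ u1 + u2 + u3 - 2*w + c4 < r4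

private lemma GoodUW_swap12 {r1 r2 r3 r4 c1 c2 c3 c4 u1 u2 u3 w : ℝ}
    (h : GoodUW r2 r1 r3 r4 c2 c1 c3 c4 u2 u1 u3 w) :
    GoodUW r1 r2 r3 r4 c1 c2 c3 c4 u1 u2 u3 w := by
  obtain ⟨p1,p2,p3,p4,p5,p6,p7,p8,p9,p10,p11,p12,p13,p14,p15,p16⟩ := h
  exact ⟨p3,p4,p1,p2,p5,p6,p7,p8, by linarith, by linarith, by linarith, by linarith,
    by linarith, by linarith, by linarith, by linarith⟩

private lemma GoodUW_swap13 {r1 r2 r3 r4 c1 c2 c3 c4 u1 u2 u3 w : ℝ}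
    (h : GoodUW r3 r2 r1 r4 c3 c2 c1 c4 u3 u2 u1 w) :
    GoodUW r1 r2 r3 r4 c1 c2 c3 c4 u1 u2 u3 w := by
  obtain ⟨p1,p2,p3,p4,p5,p6,p7,p8,p9,p10,p11,p12,p13,p14,p15,p16⟩ := h
  exact ⟨p5,p6,p3,p4,p1,p2,p7,p8, by linarith, by linarith, by linarith, by linarith,
    by linarith, by linarith, by linarith, by linarith⟩

private lemma evenA_core (r1 r2 r3 r4 c1 c2 c3 c4 b2 b3 : ℝ)
    (hr1 : 1 ≤ r1)
    (hb2 : 2*b2 = c1 + c3 - c2) (hb3 : 2*b3 = c1 + c2 - c3)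
    (hp : c2 + c3 - c1 = 2)
    (hb2a : b2 ≤ 0) (hb2b : 1 - r2 ≤ b2) (hb3a : b3 ≤ 0) (hb3b : 1 - r3 ≤ b3)
    (hc4a : c1 + 1 ≤ c4) (hc4b : c4 - c1 ≤ r4) :
    ∃ u1 u2 u3 w, GoodUW r1 r2 r3 r4 c1 c2 c3 c4 u1 u2 u3 w := by
  refine ⟨0, 1/3 - b2, 1/3 - b3, 2/3, ?_, ?_, ?_, ?_, ?_, ?_, ?_, ?_, ?_, ?_, ?_, ?_, ?_, ?_,
    ?_, ?_⟩ <;> linarith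

private lemma evenB_core (r1 r2 r3 r4 c1 c2 c3 c4 b2 b3 : ℝ)
    (hr1 : 1 ≤ r1)
    (hb2 : 2*b2 = c1 + c3 - c2) (hb3 : 2*b3 = c1 + c2 - c3)
    (hp : c2 + c3 - c1 = -(2*r1))
    (hb2a : b2 ≤ 0) (hb2b : 1 - r2 ≤ b2) (hb3a : b3 ≤ 0) (hb3b : 1 - r3 ≤ b3)
    (hc4a : c1 - c4 ≤ r1) (hc4b : c4 ≤ c1 - r1 + r4 - 1) :
    ∃ u1 u2 u3 w, GoodUW r1 r2 r3 r4 c1 c2 c3 c4 u1 u2 u3 w := by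
  refine ⟨r1 - 3/16, 7/16 - b2, 7/16 - b3, 1/8, ?_, ?_, ?_, ?_, ?_, ?_, ?_, ?_, ?_, ?_, ?_, ?_,
    ?_, ?_, ?_, ?_⟩ <;> linarith

private lemma evenC1_core (r1 r2 r3 r4 c1 c2 c3 c4 b1 b2 b3 : ℝ)
    (hb1 : 2*b1 = c2 + c3 - c1) (hb2 : 2*b2 = c1 + c3 - c2) (hb3 : 2*b3 = c1 + c2 - c3)
    (hb1a : b1 ≤ 0) (hb1b : 1 - r1 ≤ b1) (hb2a : b2 ≤ 0) (hb2b : 1 - r2 ≤ b2)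
    (hb3a : b3 ≤ 0) (hb3b : 1 - r3 ≤ b3)
    (hD0 : 0 ≤ 2*c4 - (c1 + c2 + c3)) (hD1 : 2*c4 - (c1 + c2 + c3) ≤ 2*r4 - 2) :
    ∃ u1 u2 u3 w, GoodUW r1 r2 r3 r4 c1 c2 c3 c4 u1 u2 u3 w := by
  refine ⟨1/2 - b1, 1/2 - b2, 1/2 - b3, 1/2, ?_, ?_, ?_, ?_, ?_, ?_, ?_, ?_, ?_, ?_, ?_, ?_,
    ?_, ?_, ?_, ?_⟩ <;> linarith

private lemma evenC2_core (r1 r2 r3 r4 c1 c2 c3 c4 b1 b2 b3 : ℝ)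
    (hr4 : 1 ≤ r4)
    (hb1 : 2*b1 = c2 + c3 - c1) (hb2 : 2*b2 = c1 + c3 - c2) (hb3 : 2*b3 = c1 + c2 - c3)
    (hb1a : b1 ≤ 0) (hb1b : 1 - r1 ≤ b1) (hb2a : b2 ≤ 0) (hb2b : 1 - r2 ≤ b2)
    (hb3a : b3 ≤ 0) (hb3b : 1 - r3 ≤ b3)
    (hD : 2*c4 - (c1 + c2 + c3) = -2) :
    ∃ u1 u2 u3 w, GoodUW r1 r2 r3 r4 c1 c2 c3 c4 u1 u2 u3 w := by
  refine ⟨1/2 - b1, 1/2 - b2, 1/2 - b3, 1/8, ?_, ?_, ?_, ?_, ?_, ?_, ?_, ?_, ?_, ?_, ?_, ?_,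
    ?_, ?_, ?_, ?_⟩ <;> linarith

private lemma evenC3_core (r1 r2 r3 r4 c1 c2 c3 c4 b1 b2 b3 : ℝ)
    (hr4 : 1 ≤ r4)
    (hb1 : 2*b1 = c2 + c3 - c1) (hb2 : 2*b2 = c1 + c3 - c2) (hb3 : 2*b3 = c1 + c2 - c3)
    (hb1a : b1 ≤ 0) (hb1b : 1 - r1 ≤ b1) (hb2a : b2 ≤ 0) (hb2b : 1 - r2 ≤ b2)
    (hb3a : b3 ≤ 0) (hb3b : 1 - r3 ≤ b3)
    (hD : 2*c4 - (c1 + c2 + c3) = 2*r4) :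
    ∃ u1 u2 u3 w, GoodUW r1 r2 r3 r4 c1 c2 c3 c4 u1 u2 u3 w := by
  refine ⟨1/4 - b1, 1/4 - b2, 1/4 - b3, 1/2, ?_, ?_, ?_, ?_, ?_, ?_, ?_, ?_, ?_, ?_, ?_, ?_,
    ?_, ?_, ?_, ?_⟩ <;> linarith

private lemma oddA_core (r1 r2 r3 r4 c1 c2 c3 c4 n1 n2 n3 d1 d2 d3 : ℝ)
    (hr1 : 1 ≤ r1) (hr2 : 1 ≤ r2) (hr3 : 1 ≤ r3) (hr4 : 1 ≤ r4)
    (hn1 : 0 ≤ n1) (hn2 : 0 ≤ n2) (hn3 : 0 ≤ n3)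
    (hp1 : n2 + n3 = 1 - c1) (hp2 : n1 + n3 = 1 - c2) (hp3 : n1 + n2 = 1 - c3)
    (hd10 : 0 ≤ d1) (hd11 : d1 ≤ 1/8) (hd1n : d1 ≤ n1) (hu1r : n1 - d1 < r1)
    (hd20 : 0 ≤ d2) (hd21 : d2 ≤ 1/8) (hd2n : d2 ≤ n2) (hu2r : n2 - d2 < r2)
    (hd30 : 0 ≤ d3) (hd31 : d3 ≤ 1/8) (hd3n : d3 ≤ n3) (hu3r : n3 - d3 < r3)
    (hK1 : 1 ≤ n1 + n2 + n3 + c4) (hK2 : n1 + n2 + n3 + c4 ≤ r4) :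
    ∃ u1 u2 u3 w, GoodUW r1 r2 r3 r4 c1 c2 c3 c4 u1 u2 u3 w := by
  refine ⟨n1 - d1, n2 - d2, n3 - d3, 1/4, ?_, ?_, ?_, ?_, ?_, ?_, ?_, ?_, ?_, ?_, ?_, ?_,
    ?_, ?_, ?_, ?_⟩ <;> linarith

private lemma oddB_core (r1 r2 r3 r4 c1 c2 c3 c4 n1 n2 n3 d1 d2 d3 : ℝ)
    (hr1 : 1 ≤ r1) (hr2 : 1 ≤ r2) (hr3 : 1 ≤ r3) (hr4 : 1 ≤ r4)
    (hn1 : 0 ≤ n1) (hn2 : 0 ≤ n2) (hn3 : 0 ≤ n3)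
    (hp1 : n2 + n3 = 1 - c1) (hp2 : n1 + n3 = 1 - c2) (hp3 : n1 + n2 = 1 - c3)
    (hd10 : 0 ≤ d1) (hd11 : d1 ≤ 1/8) (hd1n : d1 ≤ n1) (hu1r : n1 - d1 < r1)
    (hd20 : 0 ≤ d2) (hd21 : d2 ≤ 1/8) (hd2n : d2 ≤ n2) (hu2r : n2 - d2 < r2)
    (hd30 : 0 ≤ d3) (hd31 : d3 ≤ 1/8) (hd3n : d3 ≤ n3) (hu3r : n3 - d3 < r3)
    (hK : n1 + n2 + n3 + c4 = r4 + 1) :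
    ∃ u1 u2 u3 w, GoodUW r1 r2 r3 r4 c1 c2 c3 c4 u1 u2 u3 w := by
  refine ⟨n1 - d1, n2 - d2, n3 - d3, 3/4, ?_, ?_, ?_, ?_, ?_, ?_, ?_, ?_, ?_, ?_, ?_, ?_,
    ?_, ?_, ?_, ?_⟩ <;> linarith
private lemma exists_d (n : ℤ) (r : ℕ) (hn : 0 ≤ n) (hnr : n ≤ (r:ℤ)) (hr : 1 ≤ r) :
    ∃ d : ℝ, 0 ≤ d ∧ d ≤ 1/8 ∧ d ≤ (n:ℝ) ∧ (n:ℝ) - d < (r:ℝ) := by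
  have hrR : (1:ℝ) ≤ (r:ℝ) := by exact_mod_cast hr
  rcases eq_or_ne n 0 with h | h
  · refine ⟨0, le_refl _, by norm_num, by simp [h], ?_⟩
    rw [h]; push_cast; linarith
  · refine ⟨1/8, by norm_num, le_refl _, ?_, ?_⟩
    · have h1n : (1:ℝ) ≤ (n:ℝ) := by exact_mod_cast (show (1:ℤ) ≤ n by omega)
      linarith
    · have : (n:ℝ) ≤ (r:ℝ) := by exact_mod_cast hnr
      linarith

private lemma exists_uw (r1 r2 r3 r4 : ℕ) (c1 c2 c3 c4 : ℤ)
    (h1 : 1 ≤ r1) (h12 : r1 ≤ r2) (h23 : r2 ≤ r3) (h34 : r3 ≤ r4)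
    (hC : inC4 r1 r2 r3 r4 c1 c2 c3 c4) :
    ∃ u1 u2 u3 w : ℝ, GoodUW (r1:ℝ) (r2:ℝ) (r3:ℝ) (r4:ℝ) (c1:ℝ) (c2:ℝ) (c3:ℝ) (c4:ℝ)
      u1 u2 u3 w := by
  obtain ⟨⟨g12a,g12b⟩,⟨g13a,g13b⟩,⟨g14a,g14b⟩,⟨g23a,g23b⟩,⟨g24a,g24b⟩,⟨g34a,g34b⟩,
    ⟨gz1a,gz1b⟩,⟨gz2a,gz2b⟩,⟨gz3a,gz3b⟩,⟨gt3a,gt3b⟩,⟨gt2a,gt2b⟩,⟨gt1a,gt1b⟩,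
    ⟨gf3a,gf3b⟩,⟨gf2a,gf2b⟩,⟨gf1a,gf1b⟩,⟨gDa,gDb⟩⟩ := hC
  rcases Int.even_or_odd (c1+c2+c3) with ⟨m,hm⟩ | ⟨m,hm⟩
  · -- even case
    by_cases hA1 : c2 + c3 - c1 = 2
    · exact evenA_core (r1:ℝ) r2 r3 r4 c1 c2 c3 c4 ((m - c2 : ℤ):ℝ) ((m - c3 : ℤ):ℝ)
        (by exact_mod_cast h1)
        (by exact_mod_cast (show 2*(m - c2) = c1 + c3 - c2 by omega))
        (by exact_mod_cast (show 2*(m - c3) = c1 + c2 - c3 by omega))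
        (by exact_mod_cast hA1)
        (by exact_mod_cast (show m - c2 ≤ (0:ℤ) by omega))
        (by exact_mod_cast (show (1:ℤ) - (r2:ℤ) ≤ m - c2 by omega))
        (by exact_mod_cast (show m - c3 ≤ (0:ℤ) by omega))
        (by exact_mod_cast (show (1:ℤ) - (r3:ℤ) ≤ m - c3 by omega))
        (by exact_mod_cast (show c1 + 1 ≤ c4 by omega))
        (by exact_mod_cast (show c4 - c1 ≤ (r4:ℤ) by omega))
    · by_cases hA2 : c1 + c3 - c2 = 2
      · obtain ⟨a, b, c, w, h⟩ := evenA_core (r2:ℝ) r1 r3 r4 c2 c1 c3 c4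
          ((m - c1 : ℤ):ℝ) ((m - c3 : ℤ):ℝ)
          (by exact_mod_cast (show 1 ≤ r2 by omega))
          (by exact_mod_cast (show 2*(m - c1) = c2 + c3 - c1 by omega))
          (by exact_mod_cast (show 2*(m - c3) = c2 + c1 - c3 by omega))
          (by exact_mod_cast hA2)
          (by exact_mod_cast (show m - c1 ≤ (0:ℤ) by omega))
          (by exact_mod_cast (show (1:ℤ) - (r1:ℤ) ≤ m - c1 by omega))
          (by exact_mod_cast (show m - c3 ≤ (0:ℤ) by omega))
          (by exact_mod_cast (show (1:ℤ) - (r3:ℤ) ≤ m - c3 by omega))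
          (by exact_mod_cast (show c2 + 1 ≤ c4 by omega))
          (by exact_mod_cast (show c4 - c2 ≤ (r4:ℤ) by omega))
        exact ⟨b, a, c, w, GoodUW_swap12 h⟩
      · by_cases hA3 : c1 + c2 - c3 = 2
        · obtain ⟨a, b, c, w, h⟩ := evenA_core (r3:ℝ) r2 r1 r4 c3 c2 c1 c4
            ((m - c2 : ℤ):ℝ) ((m - c1 : ℤ):ℝ)
            (by exact_mod_cast (show 1 ≤ r3 by omega))
            (by exact_mod_cast (show 2*(m - c2) = c3 + c1 - c2 by omega))
            (by exact_mod_cast (show 2*(m - c1) = c3 + c2 - c1 by omega))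
            (by exact_mod_cast (show c2 + c1 - c3 = 2 by omega))
            (by exact_mod_cast (show m - c2 ≤ (0:ℤ) by omega))
            (by exact_mod_cast (show (1:ℤ) - (r2:ℤ) ≤ m - c2 by omega))
            (by exact_mod_cast (show m - c1 ≤ (0:ℤ) by omega))
            (by exact_mod_cast (show (1:ℤ) - (r1:ℤ) ≤ m - c1 by omega))
            (by exact_mod_cast (show c3 + 1 ≤ c4 by omega))
            (by exact_mod_cast (show c4 - c3 ≤ (r4:ℤ) by omega))
          exact ⟨c, b, a, w, GoodUW_swap13 h⟩
        · by_cases hB1 : c2 + c3 - c1 = -(2*(r1:ℤ))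
          · exact evenB_core (r1:ℝ) r2 r3 r4 c1 c2 c3 c4 ((m - c2 : ℤ):ℝ) ((m - c3 : ℤ):ℝ)
              (by exact_mod_cast h1)
              (by exact_mod_cast (show 2*(m - c2) = c1 + c3 - c2 by omega))
              (by exact_mod_cast (show 2*(m - c3) = c1 + c2 - c3 by omega))
              (by exact_mod_cast hB1)
              (by exact_mod_cast (show m - c2 ≤ (0:ℤ) by omega))
              (by exact_mod_cast (show (1:ℤ) - (r2:ℤ) ≤ m - c2 by omega))
              (by exact_mod_cast (show m - c3 ≤ (0:ℤ) by omega))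
              (by exact_mod_cast (show (1:ℤ) - (r3:ℤ) ≤ m - c3 by omega))
              (by exact_mod_cast g14b)
              (by exact_mod_cast (show c4 ≤ c1 - (r1:ℤ) + (r4:ℤ) - 1 by omega))
          · by_cases hB2 : c1 + c3 - c2 = -(2*(r2:ℤ))
            · obtain ⟨a, b, c, w, h⟩ := evenB_core (r2:ℝ) r1 r3 r4 c2 c1 c3 c4
                ((m - c1 : ℤ):ℝ) ((m - c3 : ℤ):ℝ)
                (by exact_mod_cast (show 1 ≤ r2 by omega))
                (by exact_mod_cast (show 2*(m - c1) = c2 + c3 - c1 by omega))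
                (by exact_mod_cast (show 2*(m - c3) = c2 + c1 - c3 by omega))
                (by exact_mod_cast hB2)
                (by exact_mod_cast (show m - c1 ≤ (0:ℤ) by omega))
                (by exact_mod_cast (show (1:ℤ) - (r1:ℤ) ≤ m - c1 by omega))
                (by exact_mod_cast (show m - c3 ≤ (0:ℤ) by omega))
                (by exact_mod_cast (show (1:ℤ) - (r3:ℤ) ≤ m - c3 by omega))
                (by exact_mod_cast (show c2 - c4 ≤ (r2:ℤ) by omega))
                (by exact_mod_cast (show c4 ≤ c2 - (r2:ℤ) + (r4:ℤ) - 1 by omega))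
              exact ⟨b, a, c, w, GoodUW_swap12 h⟩
            · by_cases hB3 : c1 + c2 - c3 = -(2*(r3:ℤ))
              · obtain ⟨a, b, c, w, h⟩ := evenB_core (r3:ℝ) r2 r1 r4 c3 c2 c1 c4
                  ((m - c2 : ℤ):ℝ) ((m - c1 : ℤ):ℝ)
                  (by exact_mod_cast (show 1 ≤ r3 by omega))
                  (by exact_mod_cast (show 2*(m - c2) = c3 + c1 - c2 by omega))
                  (by exact_mod_cast (show 2*(m - c1) = c3 + c2 - c1 by omega))
                  (by exact_mod_cast (show c2 + c1 - c3 = -(2*(r3:ℤ)) by omega))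
                  (by exact_mod_cast (show m - c2 ≤ (0:ℤ) by omega))
                  (by exact_mod_cast (show (1:ℤ) - (r2:ℤ) ≤ m - c2 by omega))
                  (by exact_mod_cast (show m - c1 ≤ (0:ℤ) by omega))
                  (by exact_mod_cast (show (1:ℤ) - (r1:ℤ) ≤ m - c1 by omega))
                  (by exact_mod_cast (show c3 - c4 ≤ (r3:ℤ) by omega))
                  (by exact_mod_cast (show c4 ≤ c3 - (r3:ℤ) + (r4:ℤ) - 1 by omega))
                exact ⟨c, b, a, w, GoodUW_swap13 h⟩
              · -- evenC
                by_cases hD2 : 2*c4 - (c1 + c2 + c3) = -2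
                · exact evenC2_core (r1:ℝ) r2 r3 r4 c1 c2 c3 c4
                    ((m - c1 : ℤ):ℝ) ((m - c2 : ℤ):ℝ) ((m - c3 : ℤ):ℝ)
                    (by exact_mod_cast (show 1 ≤ r4 by omega))
                    (by exact_mod_cast (show 2*(m - c1) = c2 + c3 - c1 by omega))
                    (by exact_mod_cast (show 2*(m - c2) = c1 + c3 - c2 by omega))
                    (by exact_mod_cast (show 2*(m - c3) = c1 + c2 - c3 by omega))
                    (by exact_mod_cast (show m - c1 ≤ (0:ℤ) by omega))
                    (by exact_mod_cast (show (1:ℤ) - (r1:ℤ) ≤ m - c1 by omega))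
                    (by exact_mod_cast (show m - c2 ≤ (0:ℤ) by omega))
                    (by exact_mod_cast (show (1:ℤ) - (r2:ℤ) ≤ m - c2 by omega))
                    (by exact_mod_cast (show m - c3 ≤ (0:ℤ) by omega))
                    (by exact_mod_cast (show (1:ℤ) - (r3:ℤ) ≤ m - c3 by omega))
                    (by exact_mod_cast hD2)
                · by_cases hD3 : 2*c4 - (c1 + c2 + c3) = 2*(r4:ℤ)
                  · exact evenC3_core (r1:ℝ) r2 r3 r4 c1 c2 c3 c4
                      ((m - c1 : ℤ):ℝ) ((m - c2 : ℤ):ℝ) ((m - c3 : ℤ):ℝ)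
                      (by exact_mod_cast (show 1 ≤ r4 by omega))
                      (by exact_mod_cast (show 2*(m - c1) = c2 + c3 - c1 by omega))
                      (by exact_mod_cast (show 2*(m - c2) = c1 + c3 - c2 by omega))
                      (by exact_mod_cast (show 2*(m - c3) = c1 + c2 - c3 by omega))
                      (by exact_mod_cast (show m - c1 ≤ (0:ℤ) by omega))
                      (by exact_mod_cast (show (1:ℤ) - (r1:ℤ) ≤ m - c1 by omega))
                      (by exact_mod_cast (show m - c2 ≤ (0:ℤ) by omega))
                      (by exact_mod_cast (show (1:ℤ) - (r2:ℤ) ≤ m - c2 by omega))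
                      (by exact_mod_cast (show m - c3 ≤ (0:ℤ) by omega))
                      (by exact_mod_cast (show (1:ℤ) - (r3:ℤ) ≤ m - c3 by omega))
                      (by exact_mod_cast hD3)
                  · exact evenC1_core (r1:ℝ) r2 r3 r4 c1 c2 c3 c4
                      ((m - c1 : ℤ):ℝ) ((m - c2 : ℤ):ℝ) ((m - c3 : ℤ):ℝ)
                      (by exact_mod_cast (show 2*(m - c1) = c2 + c3 - c1 by omega))
                      (by exact_mod_cast (show 2*(m - c2) = c1 + c3 - c2 by omega))
                      (by exact_mod_cast (show 2*(m - c3) = c1 + c2 - c3 by omega))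
                      (by exact_mod_cast (show m - c1 ≤ (0:ℤ) by omega))
                      (by exact_mod_cast (show (1:ℤ) - (r1:ℤ) ≤ m - c1 by omega))
                      (by exact_mod_cast (show m - c2 ≤ (0:ℤ) by omega))
                      (by exact_mod_cast (show (1:ℤ) - (r2:ℤ) ≤ m - c2 by omega))
                      (by exact_mod_cast (show m - c3 ≤ (0:ℤ) by omega))
                      (by exact_mod_cast (show (1:ℤ) - (r3:ℤ) ≤ m - c3 by omega))
                      (by exact_mod_cast (show (0:ℤ) ≤ 2*c4 - (c1 + c2 + c3) by omega))
                      (by exact_mod_cast (show 2*c4 - (c1 + c2 + c3) ≤ 2*(r4:ℤ) - 2 by omega))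
  · -- odd case
    obtain ⟨d1, hd10, hd11, hd1n, hd1r⟩ :=
      exists_d (c1 - m) r1 (by omega) (by omega) h1
    obtain ⟨d2, hd20, hd21, hd2n, hd2r⟩ :=
      exists_d (c2 - m) r2 (by omega) (by omega) (by omega)
    obtain ⟨d3, hd30, hd31, hd3n, hd3r⟩ :=
      exists_d (c3 - m) r3 (by omega) (by omega) (by omega)
    by_cases hK : c4 - m ≤ (r4:ℤ) - 1
    · exact oddA_core (r1:ℝ) r2 r3 r4 c1 c2 c3 c4
        ((c1 - m : ℤ):ℝ) ((c2 - m : ℤ):ℝ) ((c3 - m : ℤ):ℝ) d1 d2 d3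
        (by exact_mod_cast h1)
        (by exact_mod_cast (show 1 ≤ r2 by omega))
        (by exact_mod_cast (show 1 ≤ r3 by omega))
        (by exact_mod_cast (show 1 ≤ r4 by omega))
        (by exact_mod_cast (show (0:ℤ) ≤ c1 - m by omega))
        (by exact_mod_cast (show (0:ℤ) ≤ c2 - m by omega))
        (by exact_mod_cast (show (0:ℤ) ≤ c3 - m by omega))
        (by exact_mod_cast (show (c2 - m) + (c3 - m) = 1 - c1 by omega))
        (by exact_mod_cast (show (c1 - m) + (c3 - m) = 1 - c2 by omega))
        (by exact_mod_cast (show (c1 - m) + (c2 - m) = 1 - c3 by omega))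
        hd10 hd11 hd1n hd1r hd20 hd21 hd2n hd2r hd30 hd31 hd3n hd3r
        (by exact_mod_cast (show (1:ℤ) ≤ (c1 - m) + (c2 - m) + (c3 - m) + c4 by omega))
        (by exact_mod_cast (show (c1 - m) + (c2 - m) + (c3 - m) + c4 ≤ (r4:ℤ) by omega))
    · exact oddB_core (r1:ℝ) r2 r3 r4 c1 c2 c3 c4
        ((c1 - m : ℤ):ℝ) ((c2 - m : ℤ):ℝ) ((c3 - m : ℤ):ℝ) d1 d2 d3
        (by exact_mod_cast h1)
        (by exact_mod_cast (show 1 ≤ r2 by omega))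
        (by exact_mod_cast (show 1 ≤ r3 by omega))
        (by exact_mod_cast (show 1 ≤ r4 by omega))
        (by exact_mod_cast (show (0:ℤ) ≤ c1 - m by omega))
        (by exact_mod_cast (show (0:ℤ) ≤ c2 - m by omega))
        (by exact_mod_cast (show (0:ℤ) ≤ c3 - m by omega))
        (by exact_mod_cast (show (c2 - m) + (c3 - m) = 1 - c1 by omega))
        (by exact_mod_cast (show (c1 - m) + (c3 - m) = 1 - c2 by omega))
        (by exact_mod_cast (show (c1 - m) + (c2 - m) = 1 - c3 by omega))
        hd10 hd11 hd1n hd1r hd20 hd21 hd2n hd2r hd30 hd31 hd3n hd3r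
        (by exact_mod_cast (show (c1 - m) + (c2 - m) + (c3 - m) + c4 = (r4:ℤ) + 1 by omega))

set_option maxHeartbeats 2000000 in
/-- For `n = 4`, `1 ≤ r_1 ≤ r_2 ≤ r_3 ≤ r_4` and `c ∈ ℤ^4` the following are
equivalent: (a) there is `x ∈ (-1,0]^d` with `c_j - 1 < τ_j(x) ≤ c_j` for
`j = 1,2,3,4`; (b) `c ∈ C(r_1,r_2,r_3,r_4)`.  (These classes index the conic divisorial
ideals of `k[K_{r_1,r_2,r_3,r_4}]`.) -/
theorem stmt_13 (r1 r2 r3 r4 : ℕ) (h1 : 1 ≤ r1) (h12 : r1 ≤ r2) (h23 : r2 ≤ r3)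
    (h34 : r3 ≤ r4)
    (d : ℕ) (hd : d = r1 + r2 + r3 + r4)
    (V1 V2 V3 V4 : Finset (Fin d))
    (hc1 : V1.card = r1) (hc2 : V2.card = r2) (hc3 : V3.card = r3) (hc4 : V4.card = r4)
    (hd12 : Disjoint V1 V2) (hd13 : Disjoint V1 V3) (hd14 : Disjoint V1 V4)
    (hd23 : Disjoint V2 V3) (hd24 : Disjoint V2 V4) (hd34 : Disjoint V3 V4)
    (hcover : V1 ∪ V2 ∪ V3 ∪ V4 = Finset.univ)
    (vlast : Fin d) (hvlast : (vlast : ℕ) = d - 1) (hlast : vlast ∈ V4)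
    (c1 c2 c3 c4 : ℤ) :
    (∃ x : Fin d → ℝ, (∀ k, -1 < x k ∧ x k ≤ 0) ∧
      ((c1 : ℝ) - 1 < tau4 d V1 V2 V3 V1 vlast x ∧
        tau4 d V1 V2 V3 V1 vlast x ≤ (c1 : ℝ)) ∧
      ((c2 : ℝ) - 1 < tau4 d V1 V2 V3 V2 vlast x ∧
        tau4 d V1 V2 V3 V2 vlast x ≤ (c2 : ℝ)) ∧
      ((c3 : ℝ) - 1 < tau4 d V1 V2 V3 V3 vlast x ∧
        tau4 d V1 V2 V3 V3 vlast x ≤ (c3 : ℝ)) ∧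
      ((c4 : ℝ) - 1 < tau4 d V1 V2 V3 V4 vlast x ∧
        tau4 d V1 V2 V3 V4 vlast x ≤ (c4 : ℝ)))
    ↔ inC4 r1 r2 r3 r4 c1 c2 c3 c4 := by
  classical
  have hr1R : (1:ℝ) ≤ (r1:ℝ) := by exact_mod_cast h1
  have hr2R : (1:ℝ) ≤ (r2:ℝ) := by exact_mod_cast (show 1 ≤ r2 by omega)
  have hr3R : (1:ℝ) ≤ (r3:ℝ) := by exact_mod_cast (show 1 ≤ r3 by omega)
  have hr4R : (1:ℝ) ≤ (r4:ℝ) := by exact_mod_cast (show 1 ≤ r4 by omega)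
  have hV1ne : V1.Nonempty := Finset.card_pos.mp (by rw [hc1]; omega)
  have hV2ne : V2.Nonempty := Finset.card_pos.mp (by rw [hc2]; omega)
  have hV3ne : V3.Nonempty := Finset.card_pos.mp (by rw [hc3]; omega)
  have hd123 : Disjoint (V1 ∪ V2) V3 := Finset.disjoint_union_left.mpr ⟨hd13, hd23⟩
  have hsum123 : ∀ x : Fin d → ℝ,
      ∑ k ∈ V1 ∪ V2 ∪ V3, x k = (∑ k ∈ V1, x k) + (∑ k ∈ V2, x k) + (∑ k ∈ V3, x k) := by
    intro x
    rw [Finset.sum_union hd123, Finset.sum_union hd12]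
  have hsum4 : ∀ x : Fin d → ℝ,
      ∑ k ∈ V4, x k = x vlast + ∑ k ∈ V4.erase vlast, x k :=
    fun x => (Finset.add_sum_erase V4 x hlast).symm
  have hcastr4 : ((r4 - 1 : ℕ):ℝ) = (r4:ℝ) - 1 := by
    rw [Nat.cast_sub (show 1 ≤ r4 by omega)]; norm_num
  constructor
  · rintro ⟨x, hx, ⟨h1l, h1u⟩, ⟨h2l, h2u⟩, ⟨h3l, h3u⟩, ⟨h4l, h4u⟩⟩
    set s1 := ∑ k ∈ V1, x k with hs1
    set s2 := ∑ k ∈ V2, x k with hs2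
    set s3 := ∑ k ∈ V3, x k with hs3
    set s4 := ∑ k ∈ V4.erase vlast, x k with hs4
    have hs1le : s1 ≤ 0 := Finset.sum_nonpos fun k _ => (hx k).2
    have hs2le : s2 ≤ 0 := Finset.sum_nonpos fun k _ => (hx k).2
    have hs3le : s3 ≤ 0 := Finset.sum_nonpos fun k _ => (hx k).2
    have hs4le : s4 ≤ 0 := Finset.sum_nonpos fun k _ => (hx k).2
    have hs1gt : -(r1:ℝ) < s1 := by
      have h := Finset.sum_lt_sum_of_nonempty hV1ne (fun i (_ : i ∈ V1) => (hx i).1)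
      rw [Finset.sum_const, hc1, nsmul_eq_mul] at h
      linarith
    have hs2gt : -(r2:ℝ) < s2 := by
      have h := Finset.sum_lt_sum_of_nonempty hV2ne (fun i (_ : i ∈ V2) => (hx i).1)
      rw [Finset.sum_const, hc2, nsmul_eq_mul] at h
      linarith
    have hs3gt : -(r3:ℝ) < s3 := by
      have h := Finset.sum_lt_sum_of_nonempty hV3ne (fun i (_ : i ∈ V3) => (hx i).1)
      rw [Finset.sum_const, hc3, nsmul_eq_mul] at h
      linarith
    have hs4ge : -((r4:ℝ) - 1) ≤ s4 := by
      have h : ∑ _k ∈ V4.erase vlast, (-1:ℝ) ≤ s4 :=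
        Finset.sum_le_sum (fun i (_ : i ∈ V4.erase vlast) => (hx i).1.le)
      rw [Finset.sum_const, Finset.card_erase_of_mem hlast, hc4, nsmul_eq_mul, hcastr4] at h
      linarith
    have hxl1 := (hx vlast).1
    have hxl2 := (hx vlast).2
    have e1 : tau4 d V1 V2 V3 V1 vlast x = s2 + s3 - x vlast := by
      simp only [tau4]; rw [hsum123 x]; ring
    have e2 : tau4 d V1 V2 V3 V2 vlast x = s1 + s3 - x vlast := by
      simp only [tau4]; rw [hsum123 x]; ring
    have e3 : tau4 d V1 V2 V3 V3 vlast x = s1 + s2 - x vlast := by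
      simp only [tau4]; rw [hsum123 x]; ring
    have e4 : tau4 d V1 V2 V3 V4 vlast x = s1 + s2 + s3 - s4 - 2 * x vlast := by
      simp only [tau4]; rw [hsum123 x, hsum4 x]; ring
    rw [e1] at h1l h1u
    rw [e2] at h2l h2u
    rw [e3] at h3l h3u
    rw [e4] at h4l h4u
    refine ⟨⟨?_,?_⟩,⟨?_,?_⟩,⟨?_,?_⟩,⟨?_,?_⟩,⟨?_,?_⟩,⟨?_,?_⟩,⟨?_,?_⟩,⟨?_,?_⟩,⟨?_,?_⟩,
      ⟨?_,?_⟩,⟨?_,?_⟩,⟨?_,?_⟩,⟨?_,?_⟩,⟨?_,?_⟩,⟨?_,?_⟩,⟨?_,?_⟩⟩ <;>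
      (apply int_le_of_cast_lt; push_cast; linarith)
  · intro hC
    have hG := exists_uw r1 r2 r3 r4 c1 c2 c3 c4 h1 h12 h23 h34 hC
    obtain ⟨u1, u2, u3, w, hG⟩ := hG
    rw [GoodUW] at hG
    obtain ⟨hu10,hu1r,hu20,hu2r,hu30,hu3r,hw0,hw1,hp1l,hp1u,hp2l,hp2u,hp3l,hp3u,hK0,hKr⟩ := hG
    set K := u1 + u2 + u3 - 2*w + (c4:ℝ) with hKdef
    have hK0' : 0 ≤ K := by rw [hKdef]; linarith
    have hKr' : K < (r4:ℝ) := by rw [hKdef]; linarith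
    obtain ⟨v, hv0, hvK, hKv, hvtop⟩ :
        ∃ v:ℝ, 0 ≤ v ∧ v ≤ K ∧ K < v + 1 ∧ (v = 0 ∨ v < (r4:ℝ) - 1) := by
      rcases lt_or_ge K 1 with h | h
      · exact ⟨0, le_refl _, by linarith, by linarith, Or.inl rfl⟩
      · rcases le_or_gt K ((r4:ℝ) - 1) with h2 | h2
        · exact ⟨K - 1/2, by linarith, by linarith, by linarith, Or.inr (by linarith)⟩
        · exact ⟨(K + (r4:ℝ) - 2)/2, by linarith, by linarith, by linarith,
            Or.inr (by linarith)⟩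
    set xf : Fin d → ℝ := fun k =>
      if k ∈ V1 then -(u1/(r1:ℝ)) else if k ∈ V2 then -(u2/(r2:ℝ))
      else if k ∈ V3 then -(u3/(r3:ℝ)) else if k = vlast then -w
      else -(v/((r4:ℝ)-1)) with hxf
    have hval1 : ∀ k ∈ V1, xf k = -(u1/(r1:ℝ)) := by
      intro k hk; simp only [hxf]; rw [if_pos hk]
    have hval2 : ∀ k ∈ V2, xf k = -(u2/(r2:ℝ)) := by
      intro k hk; simp only [hxf]
      rw [if_neg (Finset.disjoint_right.mp hd12 hk), if_pos hk]
    have hval3 : ∀ k ∈ V3, xf k = -(u3/(r3:ℝ)) := by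
      intro k hk; simp only [hxf]
      rw [if_neg (Finset.disjoint_right.mp hd13 hk),
        if_neg (Finset.disjoint_right.mp hd23 hk), if_pos hk]
    have hvallast : xf vlast = -w := by
      simp only [hxf]
      rw [if_neg (Finset.disjoint_right.mp hd14 hlast),
        if_neg (Finset.disjoint_right.mp hd24 hlast),
        if_neg (Finset.disjoint_right.mp hd34 hlast)]
      simp
    have hval4 : ∀ k ∈ V4.erase vlast, xf k = -(v/((r4:ℝ)-1)) := by
      intro k hk
      have hk4 : k ∈ V4 := Finset.mem_of_mem_erase hk
      simp only [hxf]
      rw [if_neg (Finset.disjoint_right.mp hd14 hk4),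
        if_neg (Finset.disjoint_right.mp hd24 hk4),
        if_neg (Finset.disjoint_right.mp hd34 hk4),
        if_neg (Finset.ne_of_mem_erase hk)]
    have hsum1 : ∑ k ∈ V1, xf k = -u1 := by
      rw [Finset.sum_congr rfl hval1, Finset.sum_const, hc1, nsmul_eq_mul]
      field_simp
    have hsum2 : ∑ k ∈ V2, xf k = -u2 := by
      rw [Finset.sum_congr rfl hval2, Finset.sum_const, hc2, nsmul_eq_mul]
      field_simp
    have hsum3 : ∑ k ∈ V3, xf k = -u3 := by
      rw [Finset.sum_congr rfl hval3, Finset.sum_const, hc3, nsmul_eq_mul]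
      field_simp
    have hsum4e : ∑ k ∈ V4.erase vlast, xf k = -v := by
      rw [Finset.sum_congr rfl hval4, Finset.sum_const,
        Finset.card_erase_of_mem hlast, hc4, nsmul_eq_mul, hcastr4]
      rcases hvtop with hv | hv
      · rw [hv]; simp
      · have hr4v : (0:ℝ) < (r4:ℝ) - 1 := by linarith
        field_simp
    refine ⟨xf, ?_, ?_, ?_, ?_, ?_⟩
    · intro k
      have hk : k ∈ V1 ∪ V2 ∪ V3 ∪ V4 := by rw [hcover]; exact Finset.mem_univ k
      simp only [Finset.mem_union] at hk
      rcases hk with ((hk1 | hk2) | hk3) | hk4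
      · rw [hval1 k hk1]
        have ha : u1/(r1:ℝ) < 1 := (div_lt_one (by linarith)).mpr hu1r
        have hb : 0 ≤ u1/(r1:ℝ) := div_nonneg hu10 (by linarith)
        constructor <;> linarith
      · rw [hval2 k hk2]
        have ha : u2/(r2:ℝ) < 1 := (div_lt_one (by linarith)).mpr hu2r
        have hb : 0 ≤ u2/(r2:ℝ) := div_nonneg hu20 (by linarith)
        constructor <;> linarith
      · rw [hval3 k hk3]
        have ha : u3/(r3:ℝ) < 1 := (div_lt_one (by linarith)).mpr hu3r
        have hb : 0 ≤ u3/(r3:ℝ) := div_nonneg hu30 (by linarith)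
        constructor <;> linarith
      · by_cases hkv : k = vlast
        · rw [hkv, hvallast]
          constructor <;> linarith
        · rw [hval4 k (Finset.mem_erase.mpr ⟨hkv, hk4⟩)]
          rcases hvtop with hv | hv
          · rw [hv]
            norm_num
          · have hr4v : (0:ℝ) < (r4:ℝ) - 1 := by linarith
            have ha : v/((r4:ℝ)-1) < 1 := (div_lt_one hr4v).mpr hv
            have hb : 0 ≤ v/((r4:ℝ)-1) := div_nonneg hv0 hr4v.le
            constructor <;> linarith
    · have e1 : tau4 d V1 V2 V3 V1 vlast xf = -u2 - u3 + w := by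
        simp only [tau4]; rw [hsum123 xf, hsum1, hsum2, hsum3, hvallast]; ring
      rw [e1]
      constructor <;> linarith
    · have e2 : tau4 d V1 V2 V3 V2 vlast xf = -u1 - u3 + w := by
        simp only [tau4]; rw [hsum123 xf, hsum1, hsum2, hsum3, hvallast]; ring
      rw [e2]
      constructor <;> linarith
    · have e3 : tau4 d V1 V2 V3 V3 vlast xf = -u1 - u2 + w := by
        simp only [tau4]; rw [hsum123 xf, hsum1, hsum2, hsum3, hvallast]; ring
      rw [e3]
      constructor <;> linarith
    · have e4 : tau4 d V1 V2 V3 V4 vlast xf = -(u1+u2+u3) + 2*w + v := by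
        simp only [tau4]; rw [hsum123 xf, hsum4 xf, hsum1, hsum2, hsum3, hvallast, hsum4e]
        ring
      rw [e4]
      constructor <;> linarith
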